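/- Let (a_k)_{k≥1} be complex numbers with Σ_{k=1}^∞ (1+k)³ |a_k| < ∞, and let (c_k)_{k≥0} be defined from (a_k) by the MA recursion. Then Σ_{k=0}^∞ (1+k)³ |c_k| ≤ exp( Σ_{k=1}^∞ (1+k)³ |a_k| ); in particular sup_{k≥0} k³ |c_k| < ∞. -/

import Mathlib

open Finset

lemma cube_submul (m j : ℕ) : ((1:ℝ)+m+j)^3 ≤ ((1:ℝ)+m)^3 * ((1:ℝ)+j)^3 := by
  have hm : (0:ℝ) ≤ m := Nat.cast_nonneg m
  have hj : (0:ℝ) ≤ j := Nat.cast_nonneg j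
  nlinarith [mul_nonneg hm hj, sq_nonneg ((m:ℝ)*j), mul_nonneg (mul_nonneg hm hj) hm,
    mul_nonneg (mul_nonneg hm hj) hj]

lemma tri_sum (g : ℕ → ℕ → ℝ) (N : ℕ) :
    ∑ k ∈ range N, ∑ j ∈ range (k+1), g j (k-j)
      = ∑ j ∈ range N, ∑ m ∈ range (N-j), g j m := by
  induction N with
  | zero => simp
  | succ N ih =>
      have h1 : ∀ j ∈ range N, ∑ m ∈ range (N+1-j), g j m
          = ∑ m ∈ range (N-j), g j m + g j (N-j) := by
        intro j hj
        have hjN := Finset.mem_range.mp hj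
        have h2 : N + 1 - j = (N - j) + 1 := by omega
        rw [h2, Finset.sum_range_succ]
      rw [Finset.sum_range_succ, ih,
        Finset.sum_range_succ (fun j => ∑ m ∈ range (N+1-j), g j m) N,
        Finset.sum_congr rfl h1, Finset.sum_add_distrib]
      simp [Finset.sum_range_succ]
      ring

lemma gronwall (b d : ℕ → ℝ) (hb : ∀ m, 0 ≤ b m) (hd : ∀ k, 0 ≤ d k)
    (hd0 : d 0 = 1)
    (hrec : ∀ k : ℕ, ((k:ℝ)+1) * d (k+1)
      ≤ ∑ j ∈ range (k+1), ((k+1-j : ℕ):ℝ) * b (k+1-j) * d j) :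
    ∀ N : ℕ, ∑ k ∈ range (N+1), d k ≤ Real.exp (∑ m ∈ range N, b (m+1)) := by
  intro N
  set D : ℝ → ℝ := fun t => ∑ k ∈ range (N+1), d k * t^k with hD_def
  set B : ℝ → ℝ := fun t => ∑ m ∈ range N, b (m+1) * t^(m+1) with hB_def
  set D' : ℝ → ℝ := fun t => ∑ k ∈ range N, ((k:ℝ)+1) * d (k+1) * t^k with hD'_def
  set B' : ℝ → ℝ := fun t => ∑ m ∈ range N, ((m:ℝ)+1) * b (m+1) * t^m with hB'_def
  have hD : ∀ t : ℝ, HasDerivAt D (D' t) t := by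
    intro t
    have h1 : HasDerivAt D (∑ k ∈ range (N+1), d k * ((k:ℝ) * t^(k-1))) t := by
      apply HasDerivAt.fun_sum
      intro k _
      exact (hasDerivAt_pow k t).const_mul (d k)
    convert h1 using 1
    rw [Finset.sum_range_succ' (fun k => d k * ((k:ℝ) * t^(k-1))) N]
    simp only [hD'_def]
    push_cast
    simp
    apply Finset.sum_congr rfl
    intro k _
    push_cast
    ring
  have hB : ∀ t : ℝ, HasDerivAt B (B' t) t := by
    intro t
    have h1 : HasDerivAt B (∑ m ∈ range N, b (m+1) * (((m:ℝ)+1) * t^m)) t := by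
      apply HasDerivAt.fun_sum
      intro m _
      have := (hasDerivAt_pow (m+1) t).const_mul (b (m+1))
      exact this.congr_deriv (by simp)
    convert h1 using 1
    simp only [hB'_def]
    apply Finset.sum_congr rfl
    intro m _
    ring
  have key : ∀ t ∈ Set.Icc (0:ℝ) 1, D' t ≤ B' t * D t := by
    intro t ht
    obtain ⟨ht0, ht1⟩ := ht
    have hg : ∀ j m : ℕ, 0 ≤ ((m:ℝ)+1) * b (m+1) * d j * t^(m+j) := by
      intro j m
      have : (0:ℝ) ≤ (m:ℝ)+1 := by positivity
      exact mul_nonneg (mul_nonneg (mul_nonneg this (hb _)) (hd _)) (pow_nonneg ht0 _)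
    calc D' t ≤ ∑ k ∈ range N,
          (∑ j ∈ range (k+1), ((k+1-j : ℕ):ℝ) * b (k+1-j) * d j) * t^k := by
            apply Finset.sum_le_sum
            intro k _
            exact mul_le_mul_of_nonneg_right (hrec k) (pow_nonneg ht0 _)
      _ = ∑ k ∈ range N, ∑ j ∈ range (k+1),
            ((((k-j):ℕ):ℝ)+1) * b ((k-j)+1) * d j * t^((k-j)+j) := by
            apply Finset.sum_congr rfl
            intro k _
            rw [Finset.sum_mul]
            apply Finset.sum_congr rfl
            intro j hj
            have hjk := Finset.mem_range.mp hj
            have h1 : k + 1 - j = (k - j) + 1 := by omega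
            have h2 : (k - j) + j = k := by omega
            rw [h1, h2]
            push_cast
            ring
      _ = ∑ j ∈ range N, ∑ m ∈ range (N-j),
            ((m:ℝ)+1) * b (m+1) * d j * t^(m+j) :=
            tri_sum (fun j m => ((m:ℝ)+1) * b (m+1) * d j * t^(m+j)) N
      _ ≤ ∑ j ∈ range N, ∑ m ∈ range N,
            ((m:ℝ)+1) * b (m+1) * d j * t^(m+j) := by
            apply Finset.sum_le_sum
            intro j _
            apply Finset.sum_le_sum_of_subset_of_nonneg
            · exact Finset.range_subset_range.mpr (by omega)
            · intro m _ _; exact hg j m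
      _ ≤ ∑ j ∈ range (N+1), ∑ m ∈ range N,
            ((m:ℝ)+1) * b (m+1) * d j * t^(m+j) := by
            rw [Finset.sum_range_succ]
            have : 0 ≤ ∑ m ∈ range N, ((m:ℝ)+1) * b (m+1) * d N * t^(m+N) :=
              Finset.sum_nonneg (fun m _ => hg N m)
            linarith
      _ = B' t * D t := by
            rw [Finset.sum_mul]
            rw [Finset.sum_comm]
            apply Finset.sum_congr rfl
            intro j _
            rw [Finset.mul_sum]
            apply Finset.sum_congr rfl
            intro m _
            rw [pow_add]
            ring
  set φ : ℝ → ℝ := fun t => D t * Real.exp (-(B t)) with hφ_def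
  have hφ : ∀ t : ℝ, HasDerivAt φ ((D' t - B' t * D t) * Real.exp (-(B t))) t := by
    intro t
    have h1 : HasDerivAt (fun t => Real.exp (-(B t))) (Real.exp (-(B t)) * (-(B' t))) t :=
      (((hB t).neg).exp)
    have h2 := (hD t).mul h1
    exact h2.congr_deriv (by ring)
  have hanti : φ 1 ≤ φ 0 := by
    have hmono : AntitoneOn φ (Set.Icc 0 1) := by
      apply antitoneOn_of_deriv_nonpos (convex_Icc 0 1)
      · exact fun t _ => ((hφ t).differentiableAt).continuousAt.continuousWithinAt
      · intro t _
        exact ((hφ t).differentiableAt).differentiableWithinAt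
      · intro t ht
        rw [interior_Icc] at ht
        rw [(hφ t).deriv]
        have h1 : D' t - B' t * D t ≤ 0 := by
          have := key t ⟨le_of_lt ht.1, le_of_lt ht.2⟩
          linarith
        exact mul_nonpos_of_nonpos_of_nonneg h1 (Real.exp_nonneg _)
    exact hmono (Set.left_mem_Icc.mpr zero_le_one) (Set.right_mem_Icc.mpr zero_le_one)
      zero_le_one
  have hD0 : D 0 = 1 := by
    simp only [hD_def]
    rw [Finset.sum_eq_single 0]
    · simpa using hd0
    · intro k _ hk
      simp [zero_pow hk]
    · simp
  have hB0 : B 0 = 0 := by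
    simp [hB_def]
  have hD1 : D 1 = ∑ k ∈ range (N+1), d k := by simp [hD_def]
  have hB1 : B 1 = ∑ m ∈ range N, b (m+1) := by simp [hB_def]
  have h := hanti
  rw [hφ_def] at h
  simp only [hD0, hB0, neg_zero, Real.exp_zero, mul_one] at h
  rw [hB1, hD1] at h
  have hexp : Real.exp (-(∑ m ∈ range N, b (m+1))) > 0 := Real.exp_pos _
  calc ∑ k ∈ range (N+1), d k
      = (∑ k ∈ range (N+1), d k) * Real.exp (-(∑ m ∈ range N, b (m+1)))
        * Real.exp (∑ m ∈ range N, b (m+1)) := by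
        rw [mul_assoc, ← Real.exp_add]
        simp
    _ ≤ 1 * Real.exp (∑ m ∈ range N, b (m+1)) := by
        apply mul_le_mul_of_nonneg_right h (Real.exp_nonneg _)
    _ = Real.exp (∑ m ∈ range N, b (m+1)) := one_mul _

open Filter Topology

/-- The MA recursion: `c 0 = 1` and
`c (k+1) = ∑_{j=0}^{k} (1 - j/(k+1)) * a (k+1-j) * c j`. -/
def IsMARec (a c : ℕ → ℂ) : Prop :=
  c 0 = 1 ∧
    ∀ k : ℕ, c (k + 1) =
      ∑ j ∈ Finset.range (k + 1), (1 - (j : ℂ) / ((k : ℂ) + 1)) * a (k + 1 - j) * c j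

/-- If `∑_{k=1}^∞ (1+k)³ |a_k| < ∞` and `(c_k)` is obtained from `(a_k)` by the MA recursion,
then `∑_{k=0}^∞ (1+k)³ |c_k| ≤ exp (∑_{k=1}^∞ (1+k)³ |a_k|)`; in particular
`sup_{k ≥ 0} k³ |c_k| < ∞`. -/
theorem statement13 (a c : ℕ → ℂ)
    (ha : Summable fun k : ℕ => (1 + ((k : ℝ) + 1)) ^ 3 * ‖a (k + 1)‖)
    (hrec : IsMARec a c) :
    (∑' k : ℕ, ENNReal.ofReal ((1 + (k : ℝ)) ^ 3 * ‖c k‖) ≤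
      ENNReal.ofReal (Real.exp (∑' k : ℕ, (1 + ((k : ℝ) + 1)) ^ 3 * ‖a (k + 1)‖))) ∧
    ∃ C : ℝ, ∀ k : ℕ, (k : ℝ) ^ 3 * ‖c k‖ ≤ C := by
  set A : ℝ := ∑' k : ℕ, (1 + ((k : ℝ) + 1)) ^ 3 * ‖a (k + 1)‖ with hA_def
  set d : ℕ → ℝ := fun k => (1 + (k : ℝ)) ^ 3 * ‖c k‖ with hd_def
  set b : ℕ → ℝ := fun m => (1 + (m : ℝ)) ^ 3 * ‖a m‖ with hb_def
  have hd_nonneg : ∀ k, 0 ≤ d k := by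
    intro k
    exact mul_nonneg (by positivity) (norm_nonneg _)
  have hb_nonneg : ∀ m, 0 ≤ b m := by
    intro m
    exact mul_nonneg (by positivity) (norm_nonneg _)
  have hd0 : d 0 = 1 := by
    simp [hd_def, hrec.1]
  -- the key recursion inequality for d
  have hdrec : ∀ k : ℕ, ((k:ℝ)+1) * d (k+1)
      ≤ ∑ j ∈ Finset.range (k+1), ((k+1-j : ℕ):ℝ) * b (k+1-j) * d j := by
    intro k
    have hk1 : ((k:ℝ)+1) ≠ 0 := by positivity
    have hk1c : ((k:ℂ)+1) ≠ 0 := by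
      intro h
      have : ((k:ℝ)+1) = 0 := by exact_mod_cast congrArg Complex.re h
      exact hk1 this
    have hnorm : ‖c (k+1)‖ ≤ ∑ j ∈ Finset.range (k+1),
        ((k+1-j : ℕ):ℝ)/((k:ℝ)+1) * (‖a (k+1-j)‖ * ‖c j‖) := by
      rw [hrec.2 k]
      refine le_trans (norm_sum_le _ _) ?_
      apply Finset.sum_le_sum
      intro j hj
      have hjk := Finset.mem_range.mp hj
      have hcoef : (1 : ℂ) - (j:ℂ)/((k:ℂ)+1) = ((k+1-j : ℕ):ℂ)/((k:ℂ)+1) := by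
        rw [Nat.cast_sub (by omega : j ≤ k+1)]
        push_cast
        rw [sub_div, div_self hk1c]
      rw [norm_mul, norm_mul, hcoef, norm_div]
      have h1 : ‖((k+1-j : ℕ):ℂ)‖ = ((k+1-j : ℕ):ℝ) := by
        simp
      have h2 : ‖((k:ℂ)+1)‖ = ((k:ℝ)+1) := by
        have h3 : ((k:ℂ)+1) = ((k+1 : ℕ):ℂ) := by push_cast; ring
        rw [h3, Complex.norm_natCast]
        push_cast
        ring
      rw [h1, h2]
      ring_nf
      apply le_of_eq
      ring
    have hcube : ∀ j ∈ Finset.range (k+1),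
        (1 + ((k:ℝ)+1))^3 ≤ (1 + ((k+1-j : ℕ):ℝ))^3 * (1 + (j:ℝ))^3 := by
      intro j hj
      have hjk := Finset.mem_range.mp hj
      have h := cube_submul (k+1-j) j
      have hcast : ((k+1-j : ℕ):ℝ) + (j:ℝ) = (k:ℝ)+1 := by
        rw [Nat.cast_sub (by omega : j ≤ k+1)]
        push_cast
        ring
      calc (1 + ((k:ℝ)+1))^3 = ((1:ℝ) + ((k+1-j : ℕ):ℝ) + (j:ℝ))^3 := by
            rw [add_assoc, hcast]
        _ ≤ _ := h
    calc ((k:ℝ)+1) * d (k+1)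
        = ((k:ℝ)+1) * ((1 + ((k:ℝ)+1))^3) * ‖c (k+1)‖ := by
          simp only [hd_def]
          push_cast
          ring
      _ ≤ ((k:ℝ)+1) * ((1 + ((k:ℝ)+1))^3) * (∑ j ∈ Finset.range (k+1),
            ((k+1-j : ℕ):ℝ)/((k:ℝ)+1) * (‖a (k+1-j)‖ * ‖c j‖)) := by
          apply mul_le_mul_of_nonneg_left hnorm (by positivity)
      _ = ∑ j ∈ Finset.range (k+1), ((k+1-j : ℕ):ℝ) *
            ((1 + ((k:ℝ)+1))^3 * (‖a (k+1-j)‖ * ‖c j‖)) := by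
          rw [Finset.mul_sum]
          apply Finset.sum_congr rfl
          intro j _
          field_simp
      _ ≤ ∑ j ∈ Finset.range (k+1), ((k+1-j : ℕ):ℝ) * b (k+1-j) * d j := by
          apply Finset.sum_le_sum
          intro j hj
          have h1 : (1 + ((k:ℝ)+1))^3 * (‖a (k+1-j)‖ * ‖c j‖)
              ≤ ((1 + ((k+1-j : ℕ):ℝ))^3 * (1 + (j:ℝ))^3) * (‖a (k+1-j)‖ * ‖c j‖) :=
            mul_le_mul_of_nonneg_right (hcube j hj)
              (mul_nonneg (norm_nonneg _) (norm_nonneg _))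
          have h2 : ((k+1-j : ℕ):ℝ) * ((1 + ((k:ℝ)+1))^3 * (‖a (k+1-j)‖ * ‖c j‖))
              ≤ ((k+1-j : ℕ):ℝ) * (((1 + ((k+1-j : ℕ):ℝ))^3 * (1 + (j:ℝ))^3)
                  * (‖a (k+1-j)‖ * ‖c j‖)) :=
            mul_le_mul_of_nonneg_left h1 (Nat.cast_nonneg _)
          refine le_trans h2 (le_of_eq ?_)
          simp only [hb_def, hd_def]
          ring
  -- sum up via the Gronwall lemma
  have hApartial : ∀ N : ℕ, ∑ m ∈ Finset.range N, b (m+1) ≤ A := by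
    intro N
    have heq : ∀ m ∈ Finset.range N, b (m+1) = (1 + ((m : ℝ) + 1)) ^ 3 * ‖a (m + 1)‖ := by
      intro m _
      simp only [hb_def]
      push_cast
      ring_nf
    rw [Finset.sum_congr rfl heq]
    exact ha.sum_le_tsum (Finset.range N) (fun m _ => mul_nonneg (by positivity) (norm_nonneg _))
  have hpartial : ∀ n : ℕ, ∑ k ∈ Finset.range n, d k ≤ Real.exp A := by
    intro n
    have h1 : ∑ k ∈ Finset.range n, d k ≤ ∑ k ∈ Finset.range (n+1), d k := by
      apply Finset.sum_le_sum_of_subset_of_nonneg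
      · exact Finset.range_subset_range.mpr (by omega)
      · intro k _ _; exact hd_nonneg k
    refine le_trans h1 (le_trans (gronwall b d hb_nonneg hd_nonneg hd0 hdrec n) ?_)
    exact Real.exp_le_exp.mpr (hApartial n)
  have hsummable : Summable d := summable_of_sum_range_le hd_nonneg hpartial
  have htsum : ∑' k, d k ≤ Real.exp A := Summable.tsum_le_of_sum_range_le hsummable hpartial
  constructor
  · have h1 : (∑' k : ℕ, ENNReal.ofReal (d k)) = ENNReal.ofReal (∑' k, d k) :=
      (ENNReal.ofReal_tsum_of_nonneg hd_nonneg hsummable).symm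
    calc ∑' k : ℕ, ENNReal.ofReal ((1 + (k : ℝ)) ^ 3 * ‖c k‖)
        = ENNReal.ofReal (∑' k, d k) := h1
      _ ≤ ENNReal.ofReal (Real.exp A) := ENNReal.ofReal_le_ofReal htsum
  · refine ⟨Real.exp A, fun k => ?_⟩
    have h1 : (k:ℝ)^3 * ‖c k‖ ≤ d k := by
      simp only [hd_def]
      apply mul_le_mul_of_nonneg_right _ (norm_nonneg _)
      apply pow_le_pow_left₀ (Nat.cast_nonneg k)
      linarith
    have h2 : d k ≤ ∑' j, d j := Summable.le_tsum hsummable k (fun j _ => hd_nonneg j)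
    linarith
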